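/- arXiv:1710.06818 — 2 statements merged into one kernel-verified Lean document; each statement's English description precedes it below -/
import Mathlib

section
/- Under the spherical Gaussian mixture model in ℝ^D, the third moment tensor satisfies E[x ⊗ x ⊗ x] = Σ_k π_k a_k ⊗ a_k ⊗ a_k + σ² Σ_{i=1}^D ( μ ⊗ e_i ⊗ e_i + e_i ⊗ μ ⊗ e_i + e_i ⊗ e_i ⊗ μ ), where μ = E[x] = Σ_k π_k a_k and e_i are standard basis vectors. -/
open MeasureTheory ProbabilityTheory
open scoped NNReal ENNReal

section AuxGaussianMoments
open Real Filter

lemma pow_le_pow_mul_exp (n : ℕ) {u : ℝ} (hu : 0 ≤ u) :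
    u ^ n ≤ (n : ℝ) ^ n * Real.exp u := by
  rcases Nat.eq_zero_or_pos n with rfl | hn
  · simpa using Real.one_le_exp hu
  · have hn' : (0:ℝ) < n := by exact_mod_cast hn
    have h1 : u ≤ (n : ℝ) * Real.exp (u / n) := by
      have := Real.add_one_le_exp (u / n)
      have h2 : u / n ≤ Real.exp (u / n) := by linarith
      calc u = (n : ℝ) * (u / n) := by field_simp
        _ ≤ (n : ℝ) * Real.exp (u / n) := by
            exact mul_le_mul_of_nonneg_left h2 hn'.le
    calc u ^ n ≤ ((n : ℝ) * Real.exp (u / n)) ^ n :=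
          pow_le_pow_left₀ hu h1 n
      _ = (n : ℝ) ^ n * (Real.exp (u / n)) ^ n := mul_pow _ _ _
      _ = (n : ℝ) ^ n * Real.exp u := by
          rw [← Real.exp_nat_mul]
          congr 1
          field_simp

lemma integrable_pow_mul_exp_neg_mul_sq (n : ℕ) {b : ℝ} (hb : 0 < b) :
    Integrable fun x : ℝ => x ^ n * Real.exp (-b * x ^ 2) := by
  have hb2 : (0:ℝ) < b / 2 := half_pos hb
  refine Integrable.mono'
    ((integrable_exp_neg_mul_sq hb).add
      (((integrable_exp_neg_mul_sq hb2).const_mul ((n : ℝ) ^ n * ((b / 2)⁻¹) ^ n))))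
    ((continuous_pow n).mul (by fun_prop)).aestronglyMeasurable
    (ae_of_all _ fun x => ?_)
  have hx2 : (x ^ 2) ^ n ≤ (n : ℝ) ^ n * ((b/2)⁻¹) ^ n * Real.exp (b / 2 * x ^ 2) := by
    have := pow_le_pow_mul_exp n (u := b / 2 * x ^ 2) (by positivity)
    calc (x ^ 2) ^ n = ((b/2)⁻¹) ^ n * (b / 2 * x ^ 2) ^ n := by
          rw [← mul_pow]; congr 1; field_simp
      _ ≤ ((b/2)⁻¹) ^ n * ((n : ℝ) ^ n * Real.exp (b / 2 * x ^ 2)) := by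
          exact mul_le_mul_of_nonneg_left this (by positivity)
      _ = (n : ℝ) ^ n * ((b/2)⁻¹) ^ n * Real.exp (b / 2 * x ^ 2) := by ring
  have habs : |x| ^ n ≤ 1 + (x ^ 2) ^ n := by
    rcases le_total (|x|) 1 with h | h
    · have h1 : |x| ^ n ≤ 1 := pow_le_one₀ (abs_nonneg x) h
      have h2 : (0:ℝ) ≤ (x ^ 2) ^ n := by positivity
      linarith
    · have h1 : |x| ^ n ≤ |x| ^ (2 * n) :=
        pow_le_pow_right₀ h (by omega)
      have h2 : |x| ^ (2 * n) = (x ^ 2) ^ n := by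
        rw [← sq_abs, ← pow_mul]
      have h3 : (0:ℝ) ≤ (x^2)^n := by positivity
      linarith
  have he : Real.exp (-b * x ^ 2) ≤ 1 := by
    apply Real.exp_le_one_iff.2; nlinarith [sq_nonneg x]
  rw [norm_mul, norm_pow, Real.norm_eq_abs, Real.norm_eq_abs,
    abs_of_pos (Real.exp_pos _)]
  calc |x| ^ n * Real.exp (-b * x ^ 2)
      ≤ (1 + (x ^ 2) ^ n) * Real.exp (-b * x ^ 2) :=
        mul_le_mul_of_nonneg_right habs (Real.exp_pos _).le
    _ = Real.exp (-b * x ^ 2) + (x ^ 2) ^ n * Real.exp (-b * x ^ 2) := by ring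
    _ ≤ Real.exp (-b * x ^ 2) +
        (n : ℝ) ^ n * ((b/2)⁻¹) ^ n * Real.exp (-(b/2) * x ^ 2) := by
        have : (x ^ 2) ^ n * Real.exp (-b * x ^ 2) ≤
            (n : ℝ) ^ n * ((b/2)⁻¹) ^ n * Real.exp (-(b/2) * x ^ 2) := by
          calc (x ^ 2) ^ n * Real.exp (-b * x ^ 2)
            ≤ ((n : ℝ) ^ n * ((b/2)⁻¹) ^ n * Real.exp (b / 2 * x ^ 2)) *
              Real.exp (-b * x ^ 2) :=
              mul_le_mul_of_nonneg_right hx2 (Real.exp_pos _).le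
          _ = (n : ℝ) ^ n * ((b/2)⁻¹) ^ n * Real.exp (-(b/2) * x ^ 2) := by
              rw [mul_assoc, ← Real.exp_add]; ring_nf
        linarith

lemma integral_odd_pow_mul_exp_neg_mul_sq {n : ℕ} (hn : Odd n) (b : ℝ) :
    ∫ x : ℝ, x ^ n * Real.exp (-b * x ^ 2) = 0 := by
  have h := integral_neg_eq_self (fun x : ℝ => x ^ n * Real.exp (-b * x ^ 2)) volume
  simp only [hn.neg_pow, neg_sq, neg_mul, neg_neg, integral_neg] at h
  simp only [neg_mul]
  linarith

lemma tendsto_aux {b : ℝ} (hb : 0 < b) (l : Filter ℝ) (hl : l ≤ Filter.cocompact ℝ) :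
    Filter.Tendsto (fun x : ℝ => -(x / (2 * b)) * Real.exp (-b * x ^ 2)) l (nhds 0) := by
  have hT : Filter.Tendsto (fun x : ℝ => (2 * b)⁻¹ * (|x| ^ (1:ℝ) * Real.exp (-b * x ^ 2)))
      l (nhds 0) := by
    have := (tendsto_rpow_abs_mul_exp_neg_mul_sq_cocompact hb 1).const_mul (2 * b)⁻¹
    simpa using this.mono_left hl
  apply squeeze_zero_norm _ hT
  · intro x
    rw [norm_mul, norm_neg, norm_div, Real.norm_eq_abs, Real.norm_eq_abs,
      abs_of_pos (by positivity : (0:ℝ) < 2 * b), Real.norm_eq_abs,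
      abs_of_pos (Real.exp_pos _), Real.rpow_one]
    ring_nf
    exact le_refl _

lemma integral_sq_mul_exp_neg_mul_sq {b : ℝ} (hb : 0 < b) :
    ∫ x : ℝ, x ^ 2 * Real.exp (-b * x ^ 2) = (2 * b)⁻¹ * Real.sqrt (π / b) := by
  have hderiv : ∀ x : ℝ, HasDerivAt (fun x : ℝ => -(x / (2 * b)) * Real.exp (-b * x ^ 2))
      (x ^ 2 * Real.exp (-b * x ^ 2) - (2 * b)⁻¹ * Real.exp (-b * x ^ 2)) x := by
    intro x
    have h1 : HasDerivAt (fun x : ℝ => -(x / (2 * b))) (-(2 * b)⁻¹) x := by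
      exact ((hasDerivAt_id x).div_const (2 * b)).neg.congr_deriv (by ring)
    have h2 : HasDerivAt (fun x : ℝ => Real.exp (-b * x ^ 2)) 
        (Real.exp (-b * x ^ 2) * (-b * (2 * x))) x := by
      have h3 : HasDerivAt (fun x : ℝ => -b * x ^ 2) (-b * (2 * x)) x := by
        simpa using (hasDerivAt_pow 2 x).const_mul (-b)
      exact h3.exp
    have : HasDerivAt (fun x : ℝ => -(x / (2 * b)) * Real.exp (-b * x ^ 2)) _ x := h1.mul h2
    convert this using 1
    field_simp
    ring
  have hint : Integrable fun x : ℝ =>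
      x ^ 2 * Real.exp (-b * x ^ 2) - (2 * b)⁻¹ * Real.exp (-b * x ^ 2) :=
    (integrable_pow_mul_exp_neg_mul_sq 2 hb).sub
      ((integrable_exp_neg_mul_sq hb).const_mul _)
  have hzero := integral_of_hasDerivAt_of_tendsto hderiv hint
    (tendsto_aux hb _ _root_.atBot_le_cocompact) (tendsto_aux hb _ _root_.atTop_le_cocompact)
  rw [sub_zero] at hzero
  have hsplit : ∫ x : ℝ, (x ^ 2 * Real.exp (-b * x ^ 2) - (2 * b)⁻¹ * Real.exp (-b * x ^ 2)) =
      (∫ x : ℝ, x ^ 2 * Real.exp (-b * x ^ 2)) - ∫ x : ℝ, (2 * b)⁻¹ * Real.exp (-b * x ^ 2) :=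
    integral_sub (integrable_pow_mul_exp_neg_mul_sq 2 hb)
      ((integrable_exp_neg_mul_sq hb).const_mul _)
  rw [hzero] at hsplit
  have : ∫ x : ℝ, (2 * b)⁻¹ * Real.exp (-b * x ^ 2) = (2 * b)⁻¹ * Real.sqrt (π / b) := by
    rw [integral_const_mul, integral_gaussian]
  linarith

variable {v : ℝ≥0}

lemma integral_gaussianReal_eq (m : ℝ) (hv : v ≠ 0) (g : ℝ → ℝ) :
    ∫ x, g x ∂(gaussianReal m v) = ∫ x, gaussianPDFReal m v x * g x := by
  rw [gaussianReal_of_var_ne_zero _ hv, gaussianPDF_def]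
  have h : (fun x => ENNReal.ofReal (gaussianPDFReal m v x)) =
      fun x => ((Real.toNNReal (gaussianPDFReal m v x) : ℝ≥0) : ℝ≥0∞) := rfl
  rw [h, integral_withDensity_eq_integral_smul
    ((measurable_gaussianPDFReal m v).real_toNNReal) g]
  congr 1; ext x
  simp [NNReal.smul_def, Real.coe_toNNReal _ (gaussianPDFReal_nonneg m v x)]

lemma integrable_gaussianReal_iff (m : ℝ) (hv : v ≠ 0) (g : ℝ → ℝ) :
    Integrable g (gaussianReal m v) ↔
      Integrable (fun x => gaussianPDFReal m v x * g x) volume := by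
  rw [gaussianReal_of_var_ne_zero _ hv, gaussianPDF_def]
  have h : (fun x => ENNReal.ofReal (gaussianPDFReal m v x)) =
      fun x => ((Real.toNNReal (gaussianPDFReal m v x) : ℝ≥0) : ℝ≥0∞) := rfl
  rw [h, integrable_withDensity_iff_integrable_smul
    ((measurable_gaussianPDFReal m v).real_toNNReal)]
  constructor <;> intro hint <;> apply hint.congr <;>
    exact ae_of_all _ fun x => by
      simp [NNReal.smul_def, Real.coe_toNNReal _ (gaussianPDFReal_nonneg m v x)]

lemma centered_pdf_eq (hv : v ≠ 0) :
    ∀ x : ℝ, gaussianPDFReal 0 v x =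
      (Real.sqrt (2 * π * v))⁻¹ * Real.exp (-(2 * (v:ℝ))⁻¹ * x ^ 2) := by
  intro x
  have hv' : (0:ℝ) < v := lt_of_le_of_ne (v.coe_nonneg) (by exact_mod_cast (Ne.symm hv))
  rw [gaussianPDFReal]
  congr 1
  rw [sub_zero]
  field_simp

lemma integrable_pow_gaussianReal_centered (hv : v ≠ 0) (n : ℕ) :
    Integrable (fun x : ℝ => x ^ n) (gaussianReal 0 v) := by
  have hv' : (0:ℝ) < v := lt_of_le_of_ne (v.coe_nonneg) (by exact_mod_cast (Ne.symm hv))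
  rw [integrable_gaussianReal_iff 0 hv]
  have h : (fun x : ℝ => gaussianPDFReal 0 v x * x ^ n) =
      fun x => (Real.sqrt (2 * π * v))⁻¹ * (x ^ n * Real.exp (-(2 * (v:ℝ))⁻¹ * x ^ 2)) := by
    funext x; rw [centered_pdf_eq hv]; ring
  rw [h]
  exact (integrable_pow_mul_exp_neg_mul_sq n (by positivity)).const_mul _

lemma integral_pow_gaussianReal_centered (hv : v ≠ 0) (n : ℕ) :
    ∫ x, x ^ n ∂(gaussianReal 0 v) =
      (Real.sqrt (2 * π * v))⁻¹ * ∫ x : ℝ, x ^ n * Real.exp (-(2 * (v:ℝ))⁻¹ * x ^ 2) := by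
  rw [integral_gaussianReal_eq 0 hv]
  rw [← integral_const_mul]
  congr 1; funext x; rw [centered_pdf_eq hv]; ring

lemma integral_id_gaussianReal_centered (hv : v ≠ 0) :
    ∫ x, x ^ 1 ∂(gaussianReal 0 v) = 0 := by
  rw [integral_pow_gaussianReal_centered hv,
    integral_odd_pow_mul_exp_neg_mul_sq (by norm_num), mul_zero]

lemma integral_cube_gaussianReal_centered (hv : v ≠ 0) :
    ∫ x, x ^ 3 ∂(gaussianReal 0 v) = 0 := by
  rw [integral_pow_gaussianReal_centered hv,
    integral_odd_pow_mul_exp_neg_mul_sq (by decide), mul_zero]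

lemma integral_sq_gaussianReal_centered (hv : v ≠ 0) :
    ∫ x, x ^ 2 ∂(gaussianReal 0 v) = v := by
  have hv' : (0:ℝ) < v := lt_of_le_of_ne (v.coe_nonneg) (by exact_mod_cast (Ne.symm hv))
  rw [integral_pow_gaussianReal_centered hv,
    integral_sq_mul_exp_neg_mul_sq (by positivity)]
  have h1 : (2 * ((2 * (v:ℝ))⁻¹))⁻¹ = (v:ℝ) := by field_simp
  have h2 : π / (2 * (v:ℝ))⁻¹ = 2 * π * v := by field_simp
  rw [h1, h2]
  have h3 : Real.sqrt (2 * π * v) ≠ 0 :=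
    ne_of_gt (Real.sqrt_pos.2 (by positivity))
  field_simp

lemma gaussianReal_eq_map (m : ℝ) :
    gaussianReal m v = (gaussianReal 0 v).map (· + m) := by
  rw [gaussianReal_map_add_const, zero_add]

lemma integral_comp_gaussianReal (m : ℝ) (g : ℝ → ℝ) :
    ∫ x, g x ∂(gaussianReal m v) = ∫ x, g (x + m) ∂(gaussianReal 0 v) := by
  rw [gaussianReal_eq_map (v := v) m,
    (measurableEmbedding_addRight m).integral_map]

lemma integrable_pow_gaussianReal (hv : v ≠ 0) (m : ℝ) (n : ℕ) :
    Integrable (fun x : ℝ => x ^ n) (gaussianReal m v) := by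
  rw [gaussianReal_eq_map (v := v) m,
    (measurableEmbedding_addRight m).integrable_map_iff]
  have h : ((fun x : ℝ => x ^ n) ∘ (· + m)) =
      fun x : ℝ => ∑ k ∈ Finset.range (n + 1), x ^ k * m ^ (n - k) * (n.choose k : ℝ) := by
    funext x
    simp only [Function.comp_apply, add_pow]
  rw [h]
  exact integrable_finset_sum _ fun k _ =>
    (((integrable_pow_gaussianReal_centered hv k).mul_const _).mul_const _)

lemma integral_id_gaussianReal' (hv : v ≠ 0) (m : ℝ) :
    ∫ x, x ∂(gaussianReal m v) = m := by
  rw [integral_comp_gaussianReal (v := v) m (fun x => x)]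
  have h1 : Integrable (fun x : ℝ => x) (gaussianReal 0 v) := by
    simpa using integrable_pow_gaussianReal_centered hv 1
  rw [integral_add h1 (integrable_const m), integral_const]
  have h0 : ∫ x, x ∂(gaussianReal 0 v) = 0 := by
    simpa using integral_id_gaussianReal_centered hv
  simp [h0, measure_univ]

lemma integral_sq_gaussianReal' (hv : v ≠ 0) (m : ℝ) :
    ∫ x, x ^ 2 ∂(gaussianReal m v) = m ^ 2 + v := by
  rw [integral_comp_gaussianReal (v := v) m (fun x => x ^ 2)]
  have h : (fun x : ℝ => (x + m) ^ 2) =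
      fun x : ℝ => x ^ 2 + (2 * m * x + m ^ 2) := by funext x; ring
  have i1 : Integrable (fun x : ℝ => 2 * m * x) (gaussianReal 0 v) := by
    simpa using (integrable_pow_gaussianReal_centered hv 1).const_mul (2*m)
  have i10 : Integrable (fun x : ℝ => 2 * m * x + m ^ 2) (gaussianReal 0 v) := by
    exact i1.add (integrable_const _)
  rw [h, integral_add (integrable_pow_gaussianReal_centered hv 2) i10,
    integral_add i1 (integrable_const _), integral_const_mul, integral_const]
  have h0 : ∫ x, x ∂(gaussianReal 0 v) = 0 := by
    simpa using integral_id_gaussianReal_centered hv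
  rw [integral_sq_gaussianReal_centered hv, h0]
  simp [measure_univ]; ring

lemma integral_cube_gaussianReal' (hv : v ≠ 0) (m : ℝ) :
    ∫ x, x ^ 3 ∂(gaussianReal m v) = m ^ 3 + 3 * v * m := by
  rw [integral_comp_gaussianReal (v := v) m (fun x => x ^ 3)]
  have h : (fun x : ℝ => (x + m) ^ 3) =
      fun x : ℝ => x ^ 3 + (3 * m * x ^ 2 + (3 * m ^ 2 * x + m ^ 3)) := by funext x; ring
  have i3 := integrable_pow_gaussianReal_centered hv 3
  have i2 : Integrable (fun x : ℝ => 3 * m * x ^ 2) (gaussianReal 0 v) :=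
    (integrable_pow_gaussianReal_centered hv 2).const_mul _
  have i1 : Integrable (fun x : ℝ => 3 * m ^ 2 * x) (gaussianReal 0 v) := by
    simpa using (integrable_pow_gaussianReal_centered hv 1).const_mul (3 * m ^ 2)
  have i0 : Integrable (fun _ : ℝ => m ^ 3) (gaussianReal 0 v) := integrable_const _
  have i10 : Integrable (fun x : ℝ => 3 * m ^ 2 * x + m ^ 3) (gaussianReal 0 v) := by
    exact i1.add i0
  have i210 : Integrable (fun x : ℝ => 3 * m * x ^ 2 + (3 * m ^ 2 * x + m ^ 3))
      (gaussianReal 0 v) := by exact i2.add i10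
  rw [h, integral_add i3 i210, integral_add i2 i10,
    integral_add i1 i0, integral_const_mul, integral_const_mul, integral_const]
  have h0 : ∫ x, x ∂(gaussianReal 0 v) = 0 := by
    simpa using integral_id_gaussianReal_centered hv
  rw [integral_cube_gaussianReal_centered hv, integral_sq_gaussianReal_centered hv, h0]
  simp [measure_univ]; ring

section Pi

variable {D : ℕ} (v : ℝ≥0) (m : Fin D → ℝ) (d₁ d₂ d₃ : Fin D)

/-- exponent pattern -/
def expo (d₁ d₂ d₃ i : Fin D) : ℕ :=
  (if d₁ = i then 1 else 0) + (if d₂ = i then 1 else 0) + (if d₃ = i then 1 else 0)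

lemma prod_expo_eq (x : Fin D → ℝ) :
    ∏ i, x i ^ expo d₁ d₂ d₃ i = x d₁ * x d₂ * x d₃ := by
  simp only [expo, pow_add, Finset.prod_mul_distrib]
  simp [pow_ite, pow_one, pow_zero, Finset.prod_ite_eq]

lemma integral_pow_expo (hv : v ≠ 0) (i : Fin D) :
    ∫ y : ℝ, y ^ expo d₁ d₂ d₃ i ∂(gaussianReal (m i) v) =
      if d₁ = i then
        (if d₂ = i then (if d₃ = i then m i ^ 3 + 3 * v * m i else m i ^ 2 + v)
          else (if d₃ = i then m i ^ 2 + v else m i))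
      else
        (if d₂ = i then (if d₃ = i then m i ^ 2 + v else m i)
          else (if d₃ = i then m i else 1)) := by
  by_cases h1 : d₁ = i <;> by_cases h2 : d₂ = i <;> by_cases h3 : d₃ = i <;>
    simp only [expo, h1, h2, h3, if_true, if_false, ite_true, ite_false] <;>
    norm_num
  · rw [integral_cube_gaussianReal' hv]
  · rw [integral_sq_gaussianReal' hv]
  · rw [integral_sq_gaussianReal' hv]
  · rw [integral_sq_gaussianReal' hv]

end Pi

section Prod

variable {D : ℕ}

lemma prod_moment_ite (w : ℝ) (m : Fin D → ℝ) (d₁ d₂ d₃ : Fin D) :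
    (∏ i, (if d₁ = i then
        (if d₂ = i then (if d₃ = i then m i ^ 3 + 3 * w * m i else m i ^ 2 + w)
          else (if d₃ = i then m i ^ 2 + w else m i))
      else
        (if d₂ = i then (if d₃ = i then m i ^ 2 + w else m i)
          else (if d₃ = i then m i else 1)))) =
    m d₁ * m d₂ * m d₃ +
      w * (m d₁ * (if d₂ = d₃ then 1 else 0) + m d₂ * (if d₁ = d₃ then 1 else 0) +
        m d₃ * (if d₁ = d₂ then 1 else 0)) := by
  by_cases h12 : d₁ = d₂
  · by_cases h13 : d₁ = d₃
    · subst h12; subst h13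
      have key : ∀ i, (if d₁ = i then
          (if d₁ = i then (if d₁ = i then m i ^ 3 + 3 * w * m i else m i ^ 2 + w)
            else (if d₁ = i then m i ^ 2 + w else m i))
        else
          (if d₁ = i then (if d₁ = i then m i ^ 2 + w else m i)
            else (if d₁ = i then m i else 1))) =
          (if d₁ = i then m i ^ 3 + 3 * w * m i else 1) := by
        intro i; by_cases h : d₁ = i <;> simp [h]
      rw [Finset.prod_congr rfl (fun i _ => key i)]
      simp [Finset.prod_ite_eq]
      ring
    · subst h12
      have h13' : ¬ d₃ = d₁ := fun h => h13 h.symm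
      have key : ∀ i, (if d₁ = i then
          (if d₁ = i then (if d₃ = i then m i ^ 3 + 3 * w * m i else m i ^ 2 + w)
            else (if d₃ = i then m i ^ 2 + w else m i))
        else
          (if d₁ = i then (if d₃ = i then m i ^ 2 + w else m i)
            else (if d₃ = i then m i else 1))) =
          (if d₁ = i then m i ^ 2 + w else 1) * (if d₃ = i then m i else 1) := by
        intro i
        by_cases hA : d₁ = i <;> by_cases hB : d₃ = i
        · exact absurd (hA.trans hB.symm) h13
        · simp [hA, hB]
        · simp [hA, hB]
        · simp [hA, hB]
      rw [Finset.prod_congr rfl (fun i _ => key i), Finset.prod_mul_distrib]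
      simp [Finset.prod_ite_eq, h13, h13']
      ring
  · by_cases h13 : d₁ = d₃
    · subst h13
      have h12' : ¬ d₂ = d₁ := fun h => h12 h.symm
      have key : ∀ i, (if d₁ = i then
          (if d₂ = i then (if d₁ = i then m i ^ 3 + 3 * w * m i else m i ^ 2 + w)
            else (if d₁ = i then m i ^ 2 + w else m i))
        else
          (if d₂ = i then (if d₁ = i then m i ^ 2 + w else m i)
            else (if d₁ = i then m i else 1))) =
          (if d₁ = i then m i ^ 2 + w else 1) * (if d₂ = i then m i else 1) := by
        intro i
        by_cases hA : d₁ = i <;> by_cases hB : d₂ = i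
        · exact absurd (hA.trans hB.symm) h12
        · simp [hA, hB]
        · simp [hA, hB]
        · simp [hA, hB]
      rw [Finset.prod_congr rfl (fun i _ => key i), Finset.prod_mul_distrib]
      simp [Finset.prod_ite_eq, h12, h12']
      ring
    · by_cases h23 : d₂ = d₃
      · subst h23
        have key : ∀ i, (if d₁ = i then
            (if d₂ = i then (if d₂ = i then m i ^ 3 + 3 * w * m i else m i ^ 2 + w)
              else (if d₂ = i then m i ^ 2 + w else m i))
          else
            (if d₂ = i then (if d₂ = i then m i ^ 2 + w else m i)
              else (if d₂ = i then m i else 1))) =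
            (if d₁ = i then m i else 1) * (if d₂ = i then m i ^ 2 + w else 1) := by
          intro i
          by_cases hA : d₁ = i <;> by_cases hB : d₂ = i
          · exact absurd (hA.trans hB.symm) h12
          · simp [hA, hB]
          · simp [hA, hB]
          · simp [hA, hB]
        rw [Finset.prod_congr rfl (fun i _ => key i), Finset.prod_mul_distrib]
        simp [Finset.prod_ite_eq, h12, h13]
        ring
      · have key : ∀ i, (if d₁ = i then
            (if d₂ = i then (if d₃ = i then m i ^ 3 + 3 * w * m i else m i ^ 2 + w)
              else (if d₃ = i then m i ^ 2 + w else m i))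
          else
            (if d₂ = i then (if d₃ = i then m i ^ 2 + w else m i)
              else (if d₃ = i then m i else 1))) =
            (if d₁ = i then m i else 1) * ((if d₂ = i then m i else 1) *
              (if d₃ = i then m i else 1)) := by
          intro i
          by_cases hA : d₁ = i <;> by_cases hB : d₂ = i <;> by_cases hC : d₃ = i
          · exact absurd (hA.trans hB.symm) h12
          · exact absurd (hA.trans hB.symm) h12
          · exact absurd (hA.trans hC.symm) h13
          · simp [hA, hB, hC]
          · exact absurd (hB.trans hC.symm) h23
          · simp [hA, hB, hC]
          · simp [hA, hB, hC]
          · simp [hA, hB, hC]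
        rw [Finset.prod_congr rfl (fun i _ => key i), Finset.prod_mul_distrib,
          Finset.prod_mul_distrib]
        simp [Finset.prod_ite_eq, h12, h13, h23]
        ring

end Prod

section Assemble

lemma pi_third_moment {D : ℕ} (v : ℝ≥0) (hv : v ≠ 0) (m : Fin D → ℝ) (d₁ d₂ d₃ : Fin D) :
    ∫ x : Fin D → ℝ, x d₁ * x d₂ * x d₃ ∂(Measure.pi fun d => gaussianReal (m d) v) =
      m d₁ * m d₂ * m d₃ +
        (v:ℝ) * (m d₁ * (if d₂ = d₃ then 1 else 0) + m d₂ * (if d₁ = d₃ then 1 else 0) +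
          m d₃ * (if d₁ = d₂ then 1 else 0)) := by
  have key := MeasureTheory.integral_fintype_prod_eq_prod (E := fun _ => ℝ)
      (fun i y => y ^ expo d₁ d₂ d₃ i)
      (μ := fun i => gaussianReal (m i) v)
  have h1 : ∫ x : Fin D → ℝ, x d₁ * x d₂ * x d₃ ∂(Measure.pi fun d => gaussianReal (m d) v) =
      ∫ x : Fin D → ℝ, ∏ i, (x i) ^ expo d₁ d₂ d₃ i
        ∂(Measure.pi fun d => gaussianReal (m d) v) := by
    apply integral_congr_ae
    exact ae_of_all _ fun x => (prod_expo_eq d₁ d₂ d₃ x).symm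
  rw [h1]
  have h2 : ∫ x : Fin D → ℝ, ∏ i, (x i) ^ expo d₁ d₂ d₃ i
        ∂(Measure.pi fun d => gaussianReal (m d) v) =
      ∏ i, ∫ y : ℝ, y ^ expo d₁ d₂ d₃ i ∂(gaussianReal (m i) v) := key
  rw [h2, Finset.prod_congr rfl (fun i _ => integral_pow_expo v m d₁ d₂ d₃ hv i)]
  exact prod_moment_ite (v : ℝ) m d₁ d₂ d₃

lemma integrable_third_pi {D : ℕ} (v : ℝ≥0) (hv : v ≠ 0) (m : Fin D → ℝ)
    (d₁ d₂ d₃ : Fin D) :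
    Integrable (fun x : Fin D → ℝ => x d₁ * x d₂ * x d₃)
      (Measure.pi fun d => gaussianReal (m d) v) := by
  have key := MeasureTheory.Integrable.fintype_prod_dep (E := fun _ => ℝ)
      (f := fun i y => y ^ expo d₁ d₂ d₃ i)
      (μ := fun i => gaussianReal (m i) v)
      (fun i => integrable_pow_gaussianReal hv (m i) _)
  have key' : Integrable (fun x : Fin D → ℝ => ∏ i, (x i) ^ expo d₁ d₂ d₃ i)
      (Measure.pi fun d => gaussianReal (m d) v) := key
  exact key'.congr (ae_of_all _ fun x => prod_expo_eq d₁ d₂ d₃ x)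

end Assemble

end AuxGaussianMoments

/-- Third-moment tensor of a mixture of spherical Gaussians:
`E[x⊗x⊗x] = Σ_k π_k a_k⊗a_k⊗a_k + σ² Σ_i (μ̄⊗e_i⊗e_i + e_i⊗μ̄⊗e_i + e_i⊗e_i⊗μ̄)`. -/
theorem gaussian_mixture_third_moment (D K : ℕ) (hD : 0 < D) (hK : 0 < K)
    (a : Fin K → Fin D → ℝ) (π : Fin K → ℝ≥0) (hπ : ∑ k, π k = 1)
    (v : ℝ≥0) (hv : 0 < v)
    (μ : Measure (Fin D → ℝ))
    (hμ : μ = Measure.sum fun k : Fin K =>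
      (π k : ℝ≥0∞) • Measure.pi fun d : Fin D => gaussianReal (a k d) v)
    (mean : Fin D → ℝ) (hmean : mean = fun d => ∑ k, (π k : ℝ) * a k d)
    (e : Fin D → Fin D → ℝ) (he : ∀ i d, e i d = if d = i then 1 else 0)
    (d₁ d₂ d₃ : Fin D) :
    ∫ x, x d₁ * x d₂ * x d₃ ∂μ =
      (∑ k, (π k : ℝ) * (a k d₁ * a k d₂ * a k d₃)) +
      (v : ℝ) * ∑ i : Fin D,
        (mean d₁ * e i d₂ * e i d₃ + e i d₁ * mean d₂ * e i d₃ +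
          e i d₁ * e i d₂ * mean d₃) := by
  have hv' : v ≠ 0 := hv.ne'
  have hee : ∀ p q : Fin D, (∑ i : Fin D, e i p * e i q) = if p = q then (1:ℝ) else 0 := by
    intro p q
    simp only [he, ite_mul, one_mul, zero_mul, ← ite_and]
    by_cases hpq : p = q
    · subst hpq
      simp
    · rw [if_neg hpq, Finset.sum_eq_zero]
      intro i _
      rw [if_neg]
      rintro ⟨rfl, rfl⟩
      exact hpq rfl
  have hsum : (∑ i : Fin D,
      (mean d₁ * e i d₂ * e i d₃ + e i d₁ * mean d₂ * e i d₃ +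
        e i d₁ * e i d₂ * mean d₃)) =
      mean d₁ * (if d₂ = d₃ then 1 else 0) + mean d₂ * (if d₁ = d₃ then 1 else 0) +
        mean d₃ * (if d₁ = d₂ then 1 else 0) := by
    rw [Finset.sum_add_distrib, Finset.sum_add_distrib]
    congr 1
    · congr 1
      · rw [← hee d₂ d₃, Finset.mul_sum]
        exact Finset.sum_congr rfl fun i _ => by ring
      · rw [← hee d₁ d₃, Finset.mul_sum]
        exact Finset.sum_congr rfl fun i _ => by ring
    · rw [← hee d₁ d₂, Finset.mul_sum]
      exact Finset.sum_congr rfl fun i _ => by ring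
  rw [hsum, hμ, Measure.sum_fintype,
    integral_finset_sum_measure (fun k _ =>
      (integrable_third_pi v hv' (a k) d₁ d₂ d₃).smul_measure ENNReal.coe_ne_top)]
  have hterm : ∀ k : Fin K,
      (∫ x, x d₁ * x d₂ * x d₃ ∂((π k : ℝ≥0∞) •
        Measure.pi fun d : Fin D => gaussianReal (a k d) v)) =
      (π k : ℝ) * (a k d₁ * a k d₂ * a k d₃ +
        (v:ℝ) * (a k d₁ * (if d₂ = d₃ then 1 else 0) +
          a k d₂ * (if d₁ = d₃ then 1 else 0) + a k d₃ * (if d₁ = d₂ then 1 else 0))) := by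
    intro k
    rw [integral_smul_measure, pi_third_moment v hv' (a k) d₁ d₂ d₃]
    simp [smul_eq_mul]
  rw [Finset.sum_congr rfl fun k _ => hterm k, hmean]
  simp only []
  rw [Finset.sum_congr rfl (fun k _ => by ring :
    ∀ k ∈ Finset.univ, (π k : ℝ) * (a k d₁ * a k d₂ * a k d₃ +
        (v:ℝ) * (a k d₁ * (if d₂ = d₃ then 1 else 0) +
          a k d₂ * (if d₁ = d₃ then 1 else 0) + a k d₃ * (if d₁ = d₂ then 1 else 0))) =
      (π k : ℝ) * (a k d₁ * a k d₂ * a k d₃) +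
        (v:ℝ) * ((π k : ℝ) * a k d₁ * (if d₂ = d₃ then 1 else 0) +
          (π k : ℝ) * a k d₂ * (if d₁ = d₃ then 1 else 0) +
          (π k : ℝ) * a k d₃ * (if d₁ = d₂ then 1 else 0))),
    Finset.sum_add_distrib]
  congr 1
  rw [← Finset.mul_sum]
  congr 1
  rw [Finset.sum_add_distrib, Finset.sum_add_distrib, ← Finset.sum_mul, ← Finset.sum_mul,
    ← Finset.sum_mul]
end

section
/- In the Gamma-Poisson model (α_k ~ Gamma(c_k,b) independent, x | α coordinatewise independent Poisson with rate Aα), the matrix S defined by S = cov(x,x) − diag(E[x]) satisfies S = Σ_k var(α_k) a_k a_kᵀ = Σ_k (c_k/b²) a_k a_kᵀ, where a_k is the k-th column of A. -/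
open MeasureTheory ProbabilityTheory
open scoped NNReal ENNReal

lemma lintegral_fin_prod : ∀ {n : ℕ} {α : Fin n → Type} [∀ i, MeasurableSpace (α i)]
    (μ : ∀ i, Measure (α i)) [∀ i, SigmaFinite (μ i)] (f : ∀ i, α i → ℝ≥0∞)
    (hf : ∀ i, Measurable (f i)),
    ∫⁻ x, ∏ i, f i (x i) ∂Measure.pi μ = ∏ i, ∫⁻ y, f i y ∂μ i := by
  intro n
  induction n with
  | zero =>
      intro α _ μ _ f hf
      rw [Measure.pi_of_empty μ]
      simp [lintegral_dirac]
  | succ n ih =>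
      intro α _ μ _ f hf
      have hmp := (measurePreserving_piFinSuccAbove μ 0)
      have hgm : Measurable fun y : α 0 × (∀ j : Fin n, α ((0 : Fin (n+1)).succAbove j)) =>
          f 0 y.1 * ∏ j, f ((0 : Fin (n+1)).succAbove j) (y.2 j) :=
        ((hf 0).comp measurable_fst).mul
          (Finset.measurable_prod _ fun j _ =>
            (hf _).comp ((measurable_pi_apply j).comp measurable_snd))
      calc ∫⁻ x, ∏ i, f i (x i) ∂Measure.pi μ
          = ∫⁻ x, (fun y : α 0 × (∀ j : Fin n, α ((0 : Fin (n+1)).succAbove j)) =>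
              f 0 y.1 * ∏ j, f ((0 : Fin (n+1)).succAbove j) (y.2 j))
              (MeasurableEquiv.piFinSuccAbove α 0 x) ∂Measure.pi μ := by
            congr 1; ext x
            simp only [MeasurableEquiv.piFinSuccAbove_apply]
            rw [Fin.prod_univ_succAbove (fun i => f i (x i)) 0]
            rfl
        _ = ∫⁻ y, f 0 y.1 * ∏ j, f ((0 : Fin (n+1)).succAbove j) (y.2 j)
              ∂(μ 0).prod (Measure.pi fun j => μ ((0 : Fin (n+1)).succAbove j)) :=
            hmp.lintegral_comp hgm
        _ = (∫⁻ y, f 0 y ∂μ 0) * ∫⁻ w : ∀ j : Fin n, α ((0 : Fin (n+1)).succAbove j), ∏ j, f ((0 : Fin (n+1)).succAbove j) (w j)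
              ∂(Measure.pi fun j => μ ((0 : Fin (n+1)).succAbove j)) :=
            lintegral_prod_mul (f := f 0)
              (g := fun w : ∀ j : Fin n, α ((0 : Fin (n+1)).succAbove j) => ∏ j, f ((0 : Fin (n+1)).succAbove j) (w j)) (hf 0).aemeasurable
              (Finset.measurable_prod _ fun j _ =>
                (hf _).comp (measurable_pi_apply j)).aemeasurable
        _ = (∫⁻ y, f 0 y ∂μ 0) * ∏ j, ∫⁻ y, f ((0 : Fin (n+1)).succAbove j) y ∂μ _ := by
            rw [ih _ _ fun j => hf _]
        _ = ∏ i, ∫⁻ y, f i y ∂μ i := (Fin.prod_univ_succAbove (fun i => ∫⁻ y, f i y ∂μ i) 0).symm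

lemma lintegral_pi_eval {n : ℕ} {β : Type} [MeasurableSpace β] (μ : Fin n → Measure β)
    [∀ i, IsProbabilityMeasure (μ i)] (d : Fin n) (g : β → ℝ≥0∞) (hg : Measurable g) :
    ∫⁻ x : Fin n → β, g (x d) ∂Measure.pi μ = ∫⁻ y, g y ∂μ d := by
  classical
  set f : Fin n → β → ℝ≥0∞ := fun i => if i = d then g else fun _ => 1 with hf
  have hmeas : ∀ i, Measurable (f i) := by
    intro i; simp only [hf]; split_ifs <;> measurability
  have h1 : ∀ x : Fin n → β, g (x d) = ∏ i, f i (x i) := by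
    intro x
    rw [Finset.prod_eq_single d (fun i _ hi => by simp [hf, hi]) (by simp)]
    simp [hf]
  have h2 : ∫⁻ x : Fin n → β, g (x d) ∂Measure.pi μ
      = ∫⁻ x : Fin n → β, ∏ i, f i (x i) ∂Measure.pi μ := by
    congr 1; ext x; exact h1 x
  rw [h2, lintegral_fin_prod μ f hmeas,
    Finset.prod_eq_single d (fun i _ hi => by simp [hf, hi]) (by simp)]
  simp [hf]

lemma lintegral_pi_eval_two {n : ℕ} {β : Type} [MeasurableSpace β] (μ : Fin n → Measure β)
    [∀ i, IsProbabilityMeasure (μ i)] {d₁ d₂ : Fin n} (hne : d₁ ≠ d₂) (g₁ g₂ : β → ℝ≥0∞)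
    (hg₁ : Measurable g₁) (hg₂ : Measurable g₂) :
    ∫⁻ x : Fin n → β, g₁ (x d₁) * g₂ (x d₂) ∂Measure.pi μ
      = (∫⁻ y, g₁ y ∂μ d₁) * ∫⁻ y, g₂ y ∂μ d₂ := by
  classical
  set f : Fin n → β → ℝ≥0∞ := fun i => if i = d₁ then g₁ else if i = d₂ then g₂ else fun _ => 1
    with hf
  have hmeas : ∀ i, Measurable (f i) := by
    intro i; simp only [hf]; split_ifs <;> measurability
  have key : ∀ F : Fin n → ℝ≥0∞, (∀ i, i ≠ d₁ → i ≠ d₂ → F i = 1) →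
      ∏ i, F i = F d₁ * F d₂ := by
    intro F hF
    exact Finset.prod_eq_mul_of_mem d₁ d₂ (Finset.mem_univ _) (Finset.mem_univ _) hne
      (fun i _ hi => hF i hi.1 hi.2)
  have h2 : ∫⁻ x : Fin n → β, g₁ (x d₁) * g₂ (x d₂) ∂Measure.pi μ
      = ∫⁻ x : Fin n → β, ∏ i, f i (x i) ∂Measure.pi μ := by
    congr 1; ext x
    rw [key (fun i => f i (x i)) (fun i h1 h2 => by simp [hf, h1, h2])]
    simp [hf, hne, hne.symm]
  rw [h2, lintegral_fin_prod μ f hmeas,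
    key (fun i => ∫⁻ y, f i y ∂μ i) (fun i h1 h2 => by simp [hf, h1, h2])]
  simp [hf, hne, hne.symm]

lemma poisson_lintegral_ofReal (r : ℝ≥0) (φ : ℕ → ℝ) (hφ : ∀ n, 0 ≤ φ n) (S : ℝ)
    (h : HasSum (fun n => φ n * poissonPMFReal r n) S) :
    ∫⁻ n, ENNReal.ofReal (φ n) ∂poissonMeasure r = ENNReal.ofReal S := by
  rw [lintegral_countable' fun n => ENNReal.ofReal (φ n)]
  have hsingle : ∀ n : ℕ, poissonMeasure r {n} = ENNReal.ofReal (poissonPMFReal r n) := by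
    intro n
    rw [ProbabilityTheory.poissonMeasure_singleton]
    rfl
  calc ∑' n : ℕ, ENNReal.ofReal (φ n) * poissonMeasure r {n}
      = ∑' n : ℕ, ENNReal.ofReal (φ n * poissonPMFReal r n) := by
        congr 1; ext n
        rw [hsingle n, ← ENNReal.ofReal_mul (hφ n)]
    _ = ENNReal.ofReal S := by
        rw [← ENNReal.ofReal_tsum_of_nonneg
          (fun n => mul_nonneg (hφ n) poissonPMFReal_nonneg) h.summable, h.tsum_eq]

lemma poisson_hasSum_id (r : ℝ≥0) :
    HasSum (fun n : ℕ => (n : ℝ) * poissonPMFReal r n) (r : ℝ) := by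
  have h := (poissonPMFRealSum r).mul_left (r : ℝ)
  have heq : (fun n : ℕ => ((n + 1 : ℕ) : ℝ) * poissonPMFReal r (n + 1))
      = fun n : ℕ => (r : ℝ) * poissonPMFReal r n := by
    funext n
    simp only [poissonPMFReal, Nat.factorial_succ, Nat.cast_mul, Nat.cast_add, Nat.cast_one,
      pow_succ]
    have h1 : ((n : ℝ) + 1) ≠ 0 := by positivity
    have h2 : ((n.factorial : ℝ)) ≠ 0 := Nat.cast_ne_zero.mpr n.factorial_ne_zero
    field_simp
  have h2 : HasSum (fun n : ℕ => ((n + 1 : ℕ) : ℝ) * poissonPMFReal r (n + 1)) (r : ℝ) := by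
    rw [heq]; simpa [poissonPMFReal] using h
  have := (hasSum_nat_add_iff (f := fun n : ℕ => (n : ℝ) * poissonPMFReal r n) 1).mp h2
  simpa using this

lemma poisson_hasSum_sq (r : ℝ≥0) :
    HasSum (fun n : ℕ => ((n : ℝ))^2 * poissonPMFReal r n) ((r : ℝ) + (r : ℝ)^2) := by
  have ht : HasSum (fun n : ℕ => (n : ℝ) * ((n : ℝ) - 1) * poissonPMFReal r n) ((r : ℝ)^2) := by
    have h := (poissonPMFRealSum r).mul_left ((r : ℝ)^2)
    have heq : (fun n : ℕ => ((n + 2 : ℕ) : ℝ) * (((n + 2 : ℕ) : ℝ) - 1) *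
        poissonPMFReal r (n + 2)) = fun n : ℕ => (r : ℝ)^2 * poissonPMFReal r n := by
      funext n
      simp only [poissonPMFReal, Nat.factorial_succ, Nat.cast_mul, Nat.cast_add,
        Nat.cast_ofNat, Nat.cast_one, pow_succ]
      have h1 : ((n : ℝ) + 1) ≠ 0 := by positivity
      have h1' : ((n : ℝ) + 2) ≠ 0 := by positivity
      have h2 : ((n.factorial : ℝ)) ≠ 0 := Nat.cast_ne_zero.mpr n.factorial_ne_zero
      push_cast
      field_simp
      ring
    have h2 : HasSum (fun n : ℕ => ((n + 2 : ℕ) : ℝ) * (((n + 2 : ℕ) : ℝ) - 1) *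
        poissonPMFReal r (n + 2)) ((r : ℝ)^2) := by rw [heq]; simpa [poissonPMFReal] using h
    have := (hasSum_nat_add_iff
      (f := fun n : ℕ => (n : ℝ) * ((n : ℝ) - 1) * poissonPMFReal r n) 2).mp h2
    simpa [Finset.sum_range_succ] using this
  have := ht.add (poisson_hasSum_id r)
  have heq : (fun n : ℕ => (n : ℝ) * ((n : ℝ) - 1) * poissonPMFReal r n
      + (n : ℝ) * poissonPMFReal r n) = fun n : ℕ => ((n : ℝ))^2 * poissonPMFReal r n := by
    funext n; ring
  rw [heq] at this
  convert this using 1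
  ring

lemma poisson_lintegral_id (r : ℝ≥0) :
    ∫⁻ n : ℕ, (n : ℝ≥0∞) ∂poissonMeasure r = (r : ℝ≥0∞) := by
  have : ∀ n : ℕ, (n : ℝ≥0∞) = ENNReal.ofReal ((n : ℝ)) := by
    intro n; rw [ENNReal.ofReal_natCast]
  calc ∫⁻ n : ℕ, (n : ℝ≥0∞) ∂poissonMeasure r
      = ∫⁻ n : ℕ, ENNReal.ofReal ((n : ℝ)) ∂poissonMeasure r := by
        congr 1; ext n; exact this n
    _ = ENNReal.ofReal (r : ℝ) :=
        poisson_lintegral_ofReal r _ (fun n => Nat.cast_nonneg n) _ (poisson_hasSum_id r)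
    _ = (r : ℝ≥0∞) := ENNReal.ofReal_coe_nnreal

lemma poisson_lintegral_sq (r : ℝ≥0) :
    ∫⁻ n : ℕ, (n : ℝ≥0∞) * (n : ℝ≥0∞) ∂poissonMeasure r
      = (r : ℝ≥0∞) * (r : ℝ≥0∞) + (r : ℝ≥0∞) := by
  calc ∫⁻ n : ℕ, (n : ℝ≥0∞) * (n : ℝ≥0∞) ∂poissonMeasure r
      = ∫⁻ n : ℕ, ENNReal.ofReal (((n : ℝ))^2) ∂poissonMeasure r := by
        congr 1; ext n
        rw [sq, ENNReal.ofReal_mul (Nat.cast_nonneg n), ENNReal.ofReal_natCast]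
    _ = ENNReal.ofReal ((r : ℝ) + (r : ℝ)^2) :=
        poisson_lintegral_ofReal r _ (fun n => sq_nonneg _) _ (poisson_hasSum_sq r)
    _ = (r : ℝ≥0∞) * (r : ℝ≥0∞) + (r : ℝ≥0∞) := by
        rw [ENNReal.ofReal_add (by positivity) (sq_nonneg _), sq,
          ENNReal.ofReal_mul (by positivity)]
        simp [ENNReal.ofReal_coe_nnreal]
        ring

lemma gamma_shift {a r : ℝ} (ha : 0 < a) (hr : 0 < r) (x : ℝ) :
    gammaPDF a r x * ENNReal.ofReal x = ENNReal.ofReal (a / r) * gammaPDF (a + 1) r x := by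
  rcases lt_trichotomy x 0 with hx | hx | hx
  · rw [gammaPDF_of_neg hx, gammaPDF_of_neg hx, zero_mul, mul_zero]
  · subst hx
    rw [gammaPDF_of_nonneg le_rfl, gammaPDF_of_nonneg le_rfl]
    have h0 : (0 : ℝ) ^ (a + 1 - 1) = 0 := by
      rw [Real.zero_rpow (by linarith)]
    rw [h0]
    simp
  · rw [gammaPDF_of_nonneg hx.le, gammaPDF_of_nonneg hx.le,
      ← ENNReal.ofReal_mul (by positivity), ← ENNReal.ofReal_mul (by positivity)]
    congr 1
    have hΓ : Real.Gamma (a + 1) = a * Real.Gamma a := Real.Gamma_add_one ha.ne'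
    have hra : r ^ (a + 1) = r ^ a * r := by
      rw [Real.rpow_add hr, Real.rpow_one]
    have hxa : x ^ (a - 1) * x = x ^ (a + 1 - 1) := by
      rw [show a + 1 - 1 = (a - 1) + 1 by ring, Real.rpow_add hx, Real.rpow_one]
    have hΓa : Real.Gamma a ≠ 0 := (Real.Gamma_pos_of_pos ha).ne'
    rw [hΓ, hra, ← hxa]
    field_simp

lemma gamma_lintegral_id {a r : ℝ} (ha : 0 < a) (hr : 0 < r) :
    ∫⁻ x, ENNReal.ofReal x ∂gammaMeasure a r = ENNReal.ofReal (a / r) := by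
  rw [gammaMeasure, lintegral_withDensity_eq_lintegral_mul _
    (show Measurable (gammaPDF a r) from (measurable_gammaPDFReal a r).ennreal_ofReal)
    ENNReal.measurable_ofReal]
  calc ∫⁻ x, gammaPDF a r x * ENNReal.ofReal x
      = ∫⁻ x, ENNReal.ofReal (a / r) * gammaPDF (a + 1) r x := by
        congr 1; ext x; exact gamma_shift ha hr x
    _ = ENNReal.ofReal (a / r) * ∫⁻ x, gammaPDF (a + 1) r x :=
        lintegral_const_mul _ (measurable_gammaPDFReal (a + 1) r).ennreal_ofReal
    _ = ENNReal.ofReal (a / r) := by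
        rw [lintegral_gammaPDF_eq_one (by linarith) hr, mul_one]

lemma gamma_lintegral_sq {a r : ℝ} (ha : 0 < a) (hr : 0 < r) :
    ∫⁻ x, ENNReal.ofReal x * ENNReal.ofReal x ∂gammaMeasure a r
      = ENNReal.ofReal (a / r) * ENNReal.ofReal ((a + 1) / r) := by
  rw [gammaMeasure, lintegral_withDensity_eq_lintegral_mul _
    (show Measurable (gammaPDF a r) from (measurable_gammaPDFReal a r).ennreal_ofReal)
    (show Measurable (fun x : ℝ => ENNReal.ofReal x * ENNReal.ofReal x) from
      ENNReal.measurable_ofReal.mul ENNReal.measurable_ofReal)]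
  calc ∫⁻ x, gammaPDF a r x * (ENNReal.ofReal x * ENNReal.ofReal x)
      = ∫⁻ x, ENNReal.ofReal (a / r) * (ENNReal.ofReal ((a + 1) / r)
          * gammaPDF (a + 1 + 1) r x) := by
        congr 1; ext x
        rw [← mul_assoc, gamma_shift ha hr x, mul_assoc, gamma_shift (by linarith) hr x,
          ← mul_assoc]
    _ = ENNReal.ofReal (a / r) * (ENNReal.ofReal ((a + 1) / r)
          * ∫⁻ x, gammaPDF (a + 1 + 1) r x) := by
        rw [lintegral_const_mul _ (show Measurable (fun x => ENNReal.ofReal ((a + 1) / r)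
            * gammaPDF (a + 1 + 1) r x) from
            ((measurable_gammaPDFReal (a + 1 + 1) r).ennreal_ofReal).const_mul _),
          lintegral_const_mul _ (show Measurable (gammaPDF (a + 1 + 1) r) from
            (measurable_gammaPDFReal (a + 1 + 1) r).ennreal_ofReal)]
    _ = ENNReal.ofReal (a / r) * ENNReal.ofReal ((a + 1) / r) := by
        rw [lintegral_gammaPDF_eq_one (by linarith) hr, mul_one]

lemma poissonMeasure_singleton (r : ℝ≥0) (n : ℕ) :
    poissonMeasure r {n} = ENNReal.ofReal (poissonPMFReal r n) := by
  rw [ProbabilityTheory.poissonMeasure_singleton]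
  rfl

lemma measurable_poisson_kernel {D K : ℕ} (A : Matrix (Fin D) (Fin K) ℝ) :
    Measurable fun α : Fin K → ℝ => Measure.pi fun d : Fin D =>
      poissonMeasure (Real.toNNReal (∑ k, A d k * α k)) := by
  apply Measure.measurable_measure.mpr
  intro s _
  have hsingle : ∀ (α : Fin K → ℝ) (x : Fin D → ℕ),
      (Measure.pi fun d : Fin D => poissonMeasure (Real.toNNReal (∑ k, A d k * α k))) {x}
      = ∏ d, ENNReal.ofReal (poissonPMFReal (Real.toNNReal (∑ k, A d k * α k)) (x d)) := by
    intro α x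
    rw [← Set.univ_pi_singleton x, Measure.pi_pi]
    exact Finset.prod_congr rfl fun d _ => _root_.poissonMeasure_singleton _ _
  have hrepr : ∀ α : Fin K → ℝ,
      (Measure.pi fun d : Fin D => poissonMeasure (Real.toNNReal (∑ k, A d k * α k))) s
      = ∑' x : s, ∏ d, ENNReal.ofReal
          (poissonPMFReal (Real.toNNReal (∑ k, A d k * α k)) ((x : Fin D → ℕ) d)) := by
    intro α
    have := tsum_measure_preimage_singleton
      (μ := Measure.pi fun d : Fin D => poissonMeasure (Real.toNNReal (∑ k, A d k * α k)))
      (s.to_countable) (f := id) (fun y _ => by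
        simpa using (measurableSet_singleton y : MeasurableSet {y}))
    simp only [Set.preimage_id] at this
    rw [← this]
    exact tsum_congr fun x => hsingle α x
  simp only [hrepr]
  apply Measurable.ennreal_tsum
  intro x
  apply Finset.measurable_prod
  intro d _
  have hR : Measurable fun α : Fin K → ℝ => ∑ k, A d k * α k :=
    Finset.measurable_sum _ fun k _ => by fun_prop
  have hg : Measurable fun α : Fin K → ℝ => max (∑ k, A d k * α k) 0 :=
    hR.max measurable_const
  have heq : (fun α : Fin K → ℝ =>
      ENNReal.ofReal (poissonPMFReal (Real.toNNReal (∑ k, A d k * α k)) ((x : Fin D → ℕ) d)))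
      = fun α : Fin K → ℝ => ENNReal.ofReal
        (Real.exp (-(max (∑ k, A d k * α k) 0)) * (max (∑ k, A d k * α k) 0)
          ^ ((x : Fin D → ℕ) d) / ((x : Fin D → ℕ) d).factorial) := by
    funext α
    simp only [poissonPMFReal, Real.coe_toNNReal']
  rw [heq]
  exact (((hg.neg.exp).mul (hg.pow_const _)).div_const _).ennreal_ofReal

lemma gamma_pi_ae_nonneg {K : ℕ} (c : Fin K → ℝ) (b : ℝ) (hc : ∀ k, 0 < c k) (hb : 0 < b) :
    ∀ᵐ α ∂(Measure.pi fun k : Fin K => gammaMeasure (c k) b), ∀ k, 0 ≤ α k := by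
  haveI : ∀ k, IsProbabilityMeasure (gammaMeasure (c k) b) :=
    fun k => isProbabilityMeasure_gammaMeasure (hc k) hb
  rw [ae_all_iff]
  intro k
  have hnull : gammaMeasure (c k) b (Set.Iio 0) = 0 := by
    rw [gammaMeasure, withDensity_apply _ measurableSet_Iio]
    exact lintegral_gammaPDF_of_nonpos le_rfl
  have : Measure.pi (fun k : Fin K => gammaMeasure (c k) b)
      (Function.eval k ⁻¹' Set.Iio 0) = 0 :=
    Measure.pi_eval_preimage_null _ hnull
  rw [ae_iff]
  convert this using 2
  ext α
  simp [Set.mem_preimage]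


/-- In the Gamma-Poisson model, `S = cov(x,x) − diag(E[x])` satisfies
`S = Σ_k var(α_k) a_k a_kᵀ = Σ_k (c_k/b²) a_k a_kᵀ`, where `a_k` is the `k`-th
column of `A`. -/
theorem gamma_poisson_second_moment (D K : ℕ) (hD : 0 < D) (hK : 0 < K)
    (A : Matrix (Fin D) (Fin K) ℝ) (hA : ∀ d k, 0 ≤ A d k)
    (c : Fin K → ℝ) (hc : ∀ k, 0 < c k) (b : ℝ) (hb : 0 < b)
    (ν : Measure (Fin D → ℕ))
    (hν : ν = (Measure.pi fun k : Fin K => gammaMeasure (c k) b).bind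
      fun α : Fin K → ℝ => Measure.pi fun d : Fin D =>
        poissonMeasure (Real.toNNReal (∑ k, A d k * α k)))
    (m : Fin D → ℝ) (hm : ∀ d, m d = ∫ x, (x d : ℝ) ∂ν)
    (d₁ d₂ : Fin D) :
    (∫ x, ((x d₁ : ℝ) - m d₁) * ((x d₂ : ℝ) - m d₂) ∂ν) -
        (if d₁ = d₂ then m d₁ else 0) =
      ∑ k, (c k / b ^ 2) * (A d₁ k * A d₂ k) := by
  classical
  haveI hgp : ∀ k : Fin K, IsProbabilityMeasure (gammaMeasure (c k) b) :=
    fun k => isProbabilityMeasure_gammaMeasure (hc k) hb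
  set μG : Measure (Fin K → ℝ) := Measure.pi fun k : Fin K => gammaMeasure (c k) b with hμG
  have hκ : Measurable fun α : Fin K → ℝ => Measure.pi fun d : Fin D =>
      poissonMeasure (Real.toNNReal (∑ k, A d k * α k)) := measurable_poisson_kernel A
  have hnn := gamma_pi_ae_nonneg c b hc hb
  -- basic measurability
  have hnat : Measurable fun n : ℕ => (n : ℝ≥0∞) := measurable_from_nat
  have hxd : ∀ d : Fin D, Measurable fun x : Fin D → ℕ => ((x d : ℕ) : ℝ≥0∞) :=
    fun d => hnat.comp (measurable_pi_apply d)
  have hevk : ∀ k : Fin K, Measurable fun α : Fin K → ℝ => ENNReal.ofReal (α k) :=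
    fun k => ENNReal.measurable_ofReal.comp (measurable_pi_apply k)
  have hRm : ∀ d : Fin D, Measurable fun α : Fin K → ℝ => ENNReal.ofReal (∑ k, A d k * α k) :=
    fun d => (Finset.measurable_sum _ fun k _ =>
      by fun_prop).ennreal_ofReal
  -- abbreviations
  set M : Fin D → ℝ := fun d => ∑ k, A d k * (c k / b) with hM
  set g : Fin K → Fin K → ℝ := fun k l =>
    if k = l then (c k / b) * ((c k + 1) / b) else (c k / b) * (c l / b) with hg
  set P : ℝ := ∑ k, ∑ l, A d₁ k * A d₂ l * g k l with hP
  have hM_nonneg : ∀ d, 0 ≤ M d := fun d => Finset.sum_nonneg fun k _ =>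
    mul_nonneg (hA d k) (div_nonneg (hc k).le hb.le)
  have hg_nonneg : ∀ k l, 0 ≤ g k l := by
    intro k l
    simp only [hg]
    split_ifs
    · exact mul_nonneg (div_nonneg (hc k).le hb.le)
        (div_nonneg (by linarith [(hc k).le]) hb.le)
    · exact mul_nonneg (div_nonneg (hc k).le hb.le) (div_nonneg (hc l).le hb.le)
  have hP_nonneg : 0 ≤ P := Finset.sum_nonneg fun k _ => Finset.sum_nonneg fun l _ =>
    mul_nonneg (mul_nonneg (hA d₁ k) (hA d₂ l)) (hg_nonneg k l)
  -- gamma one- and two-coordinate moments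
  have hEk : ∀ k : Fin K, ∫⁻ α, ENNReal.ofReal (α k) ∂μG = ENNReal.ofReal (c k / b) := by
    intro k
    rw [hμG, lintegral_pi_eval _ k _ ENNReal.measurable_ofReal]
    exact gamma_lintegral_id (hc k) hb
  have hEkl : ∀ k l : Fin K, ∫⁻ α, ENNReal.ofReal (α k) * ENNReal.ofReal (α l) ∂μG
      = ENNReal.ofReal (g k l) := by
    intro k l
    by_cases hkl : k = l
    · subst hkl
      rw [hμG, lintegral_pi_eval (fun k => gammaMeasure (c k) b) k
        (fun y => ENNReal.ofReal y * ENNReal.ofReal y)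
        (ENNReal.measurable_ofReal.mul ENNReal.measurable_ofReal)]
      rw [gamma_lintegral_sq (hc k) hb]
      simp only [hg, if_pos rfl]
      rw [ENNReal.ofReal_mul (div_nonneg (hc k).le hb.le)]
    · rw [hμG, lintegral_pi_eval_two (fun k => gammaMeasure (c k) b) hkl _ _
        ENNReal.measurable_ofReal ENNReal.measurable_ofReal,
        gamma_lintegral_id (hc k) hb, gamma_lintegral_id (hc l) hb]
      simp only [hg, if_neg hkl]
      rw [ENNReal.ofReal_mul (div_nonneg (hc k).le hb.le)]
  -- mean of rates under the gamma prior
  have hMR : ∀ d : Fin D, ∫⁻ α, ENNReal.ofReal (∑ k, A d k * α k) ∂μG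
      = ENNReal.ofReal (M d) := by
    intro d
    have hcongr : ∫⁻ α, ENNReal.ofReal (∑ k, A d k * α k) ∂μG
        = ∫⁻ α, ∑ k, ENNReal.ofReal (A d k) * ENNReal.ofReal (α k) ∂μG := by
      apply lintegral_congr_ae
      filter_upwards [hnn] with α hα
      rw [ENNReal.ofReal_sum_of_nonneg fun k _ => mul_nonneg (hA d k) (hα k)]
      exact Finset.sum_congr rfl fun k _ => ENNReal.ofReal_mul (hA d k)
    rw [hcongr, lintegral_finset_sum _ fun k _ => (hevk k).const_mul _]
    calc ∑ k, ∫⁻ α, ENNReal.ofReal (A d k) * ENNReal.ofReal (α k) ∂μG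
        = ∑ k, ENNReal.ofReal (A d k) * ENNReal.ofReal (c k / b) := by
          refine Finset.sum_congr rfl fun k _ => ?_
          rw [lintegral_const_mul _ (hevk k), hEk k]
      _ = ∑ k, ENNReal.ofReal (A d k * (c k / b)) := by
          refine Finset.sum_congr rfl fun k _ => (ENNReal.ofReal_mul (hA d k)).symm
      _ = ENNReal.ofReal (M d) := by
          rw [← ENNReal.ofReal_sum_of_nonneg fun k _ =>
            mul_nonneg (hA d k) (div_nonneg (hc k).le hb.le)]
  -- second moment of rates under the gamma prior
  have hII : ∫⁻ α, ENNReal.ofReal (∑ k, A d₁ k * α k) * ENNReal.ofReal (∑ k, A d₂ k * α k) ∂μG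
      = ENNReal.ofReal P := by
    have hcongr : ∫⁻ α, ENNReal.ofReal (∑ k, A d₁ k * α k)
        * ENNReal.ofReal (∑ k, A d₂ k * α k) ∂μG
        = ∫⁻ α, ∑ k, ∑ l, (ENNReal.ofReal (A d₁ k) * ENNReal.ofReal (A d₂ l))
            * (ENNReal.ofReal (α k) * ENNReal.ofReal (α l)) ∂μG := by
      apply lintegral_congr_ae
      filter_upwards [hnn] with α hα
      rw [ENNReal.ofReal_sum_of_nonneg fun k _ => mul_nonneg (hA d₁ k) (hα k),
        ENNReal.ofReal_sum_of_nonneg fun k _ => mul_nonneg (hA d₂ k) (hα k),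
        Finset.sum_mul_sum]
      refine Finset.sum_congr rfl fun k _ => Finset.sum_congr rfl fun l _ => ?_
      rw [ENNReal.ofReal_mul (hA d₁ k), ENNReal.ofReal_mul (hA d₂ l)]
      ring
    rw [hcongr, lintegral_finset_sum _ fun k _ => Finset.measurable_sum _ fun l _ =>
      ((show Measurable (fun α : Fin K → ℝ => ENNReal.ofReal (α k) * ENNReal.ofReal (α l)) from (hevk k).mul (hevk l)).const_mul _)]
    calc ∑ k, ∫⁻ α, ∑ l, (ENNReal.ofReal (A d₁ k) * ENNReal.ofReal (A d₂ l))
          * (ENNReal.ofReal (α k) * ENNReal.ofReal (α l)) ∂μG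
        = ∑ k, ∑ l, (ENNReal.ofReal (A d₁ k) * ENNReal.ofReal (A d₂ l))
            * ENNReal.ofReal (g k l) := by
          refine Finset.sum_congr rfl fun k _ => ?_
          rw [lintegral_finset_sum _ fun l _ => ((show Measurable (fun α : Fin K → ℝ => ENNReal.ofReal (α k) * ENNReal.ofReal (α l)) from (hevk k).mul (hevk l)).const_mul _)]
          refine Finset.sum_congr rfl fun l _ => ?_
          rw [lintegral_const_mul _ (show Measurable (fun α : Fin K → ℝ => ENNReal.ofReal (α k) * ENNReal.ofReal (α l)) from (hevk k).mul (hevk l)), hEkl k l]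
      _ = ∑ k, ∑ l, ENNReal.ofReal (A d₁ k * A d₂ l * g k l) := by
          refine Finset.sum_congr rfl fun k _ => Finset.sum_congr rfl fun l _ => ?_
          rw [ENNReal.ofReal_mul (mul_nonneg (hA d₁ k) (hA d₂ l)), ENNReal.ofReal_mul (hA d₁ k)]
      _ = ENNReal.ofReal P := by
          rw [hP, ENNReal.ofReal_sum_of_nonneg fun k _ => Finset.sum_nonneg fun l _ =>
            mul_nonneg (mul_nonneg (hA d₁ k) (hA d₂ l)) (hg_nonneg k l)]
          exact Finset.sum_congr rfl fun k _ =>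
            (ENNReal.ofReal_sum_of_nonneg fun l _ =>
              mul_nonneg (mul_nonneg (hA d₁ k) (hA d₂ l)) (hg_nonneg k l)).symm
  -- first moments under ν
  have hL1 : ∀ d : Fin D, ∫⁻ x, ((x d : ℕ) : ℝ≥0∞) ∂ν = ENNReal.ofReal (M d) := by
    intro d
    rw [hν, Measure.lintegral_bind hκ.aemeasurable (hxd d).aemeasurable]
    have hinner : ∀ α : Fin K → ℝ,
        ∫⁻ x : Fin D → ℕ, ((x d : ℕ) : ℝ≥0∞)
          ∂(Measure.pi fun d : Fin D => poissonMeasure (Real.toNNReal (∑ k, A d k * α k)))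
        = ENNReal.ofReal (∑ k, A d k * α k) := by
      intro α
      rw [lintegral_pi_eval _ d _ hnat, poisson_lintegral_id]
      rfl
    rw [lintegral_congr hinner]
    exact hMR d
  -- second moments under ν
  have hL2 : ∫⁻ x, ((x d₁ : ℕ) : ℝ≥0∞) * ((x d₂ : ℕ) : ℝ≥0∞) ∂ν
      = ENNReal.ofReal (P + if d₁ = d₂ then M d₁ else 0) := by
    rw [hν, Measure.lintegral_bind hκ.aemeasurable
      (show Measurable (fun x : Fin D → ℕ => ((x d₁ : ℕ) : ℝ≥0∞) * ((x d₂ : ℕ) : ℝ≥0∞)) from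
        (hxd d₁).mul (hxd d₂)).aemeasurable]
    have hinner : ∀ α : Fin K → ℝ,
        ∫⁻ x : Fin D → ℕ, ((x d₁ : ℕ) : ℝ≥0∞) * ((x d₂ : ℕ) : ℝ≥0∞)
          ∂(Measure.pi fun d : Fin D => poissonMeasure (Real.toNNReal (∑ k, A d k * α k)))
        = ENNReal.ofReal (∑ k, A d₁ k * α k) * ENNReal.ofReal (∑ k, A d₂ k * α k)
          + if d₁ = d₂ then ENNReal.ofReal (∑ k, A d₁ k * α k) else 0 := by
      intro α
      by_cases hd : d₁ = d₂
      · subst hd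
        rw [if_pos rfl]
        have : ∀ x : Fin D → ℕ, ((x d₁ : ℕ) : ℝ≥0∞) * ((x d₁ : ℕ) : ℝ≥0∞)
            = (fun n : ℕ => (n : ℝ≥0∞) * (n : ℝ≥0∞)) (x d₁) := fun x => rfl
        rw [lintegral_congr fun x => this x,
          lintegral_pi_eval _ d₁ _
            (show Measurable (fun n : ℕ => (n : ℝ≥0∞) * (n : ℝ≥0∞)) from hnat.mul hnat), poisson_lintegral_sq]
        rfl
      · rw [if_neg hd, add_zero,
          lintegral_pi_eval_two _ hd _ _ hnat hnat, poisson_lintegral_id,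
          poisson_lintegral_id]
        rfl
    rw [lintegral_congr hinner]
    by_cases hd : d₁ = d₂
    · simp only [if_pos hd]
      rw [lintegral_add_left (show Measurable (fun α : Fin K → ℝ =>
        ENNReal.ofReal (∑ k, A d₁ k * α k) * ENNReal.ofReal (∑ k, A d₂ k * α k)) from
        (hRm d₁).mul (hRm d₂)), hII, hMR d₁,
        ENNReal.ofReal_add hP_nonneg (hM_nonneg d₁)]
    · simp only [if_neg hd]
      rw [lintegral_add_left (show Measurable (fun α : Fin K → ℝ =>
        ENNReal.ofReal (∑ k, A d₁ k * α k) * ENNReal.ofReal (∑ k, A d₂ k * α k)) from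
        (hRm d₁).mul (hRm d₂)), hII]
      simp
  -- ν is a probability measure
  haveI hνprob : IsProbabilityMeasure ν := by
    constructor
    rw [hν, Measure.bind_apply MeasurableSet.univ hκ.aemeasurable]
    simp only [measure_univ]
    rw [lintegral_one, measure_univ]
  -- Bochner integrals
  have hmeas1 : ∀ d : Fin D, Measurable fun x : Fin D → ℕ => ((x d : ℕ) : ℝ) :=
    fun d => measurable_from_nat.comp (measurable_pi_apply d)
  have hofReal1 : ∀ (d : Fin D) (x : Fin D → ℕ),
      ENNReal.ofReal ((x d : ℕ) : ℝ) = ((x d : ℕ) : ℝ≥0∞) := fun d x => ENNReal.ofReal_natCast _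
  have hint1 : ∀ d : Fin D, Integrable (fun x : Fin D → ℕ => ((x d : ℕ) : ℝ)) ν := by
    intro d
    refine ⟨(hmeas1 d).aestronglyMeasurable, ?_⟩
    rw [hasFiniteIntegral_iff_ofReal (Filter.Eventually.of_forall fun x => Nat.cast_nonneg _)]
    rw [lintegral_congr fun x => hofReal1 d x, hL1 d]
    exact ENNReal.ofReal_lt_top
  have hint2 : Integrable (fun x : Fin D → ℕ => ((x d₁ : ℕ) : ℝ) * ((x d₂ : ℕ) : ℝ)) ν := by
    refine ⟨((hmeas1 d₁).mul (hmeas1 d₂)).aestronglyMeasurable, ?_⟩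
    rw [hasFiniteIntegral_iff_ofReal (Filter.Eventually.of_forall fun x =>
      mul_nonneg (Nat.cast_nonneg _) (Nat.cast_nonneg _))]
    have : ∀ x : Fin D → ℕ, ENNReal.ofReal (((x d₁ : ℕ) : ℝ) * ((x d₂ : ℕ) : ℝ))
        = ((x d₁ : ℕ) : ℝ≥0∞) * ((x d₂ : ℕ) : ℝ≥0∞) := by
      intro x
      rw [ENNReal.ofReal_mul (Nat.cast_nonneg _), hofReal1 d₁ x, hofReal1 d₂ x]
    rw [lintegral_congr this, hL2]
    exact ENNReal.ofReal_lt_top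
  have hmean : ∀ d : Fin D, m d = M d := by
    intro d
    rw [hm d, integral_eq_lintegral_of_nonneg_ae
      (Filter.Eventually.of_forall fun x => Nat.cast_nonneg _)
      (hmeas1 d).aestronglyMeasurable,
      lintegral_congr fun x => hofReal1 d x, hL1 d,
      ENNReal.toReal_ofReal (hM_nonneg d)]
  have hI2 : ∫ x, ((x d₁ : ℕ) : ℝ) * ((x d₂ : ℕ) : ℝ) ∂ν
      = P + if d₁ = d₂ then M d₁ else 0 := by
    rw [integral_eq_lintegral_of_nonneg_ae
      (Filter.Eventually.of_forall fun x => mul_nonneg (Nat.cast_nonneg _) (Nat.cast_nonneg _))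
      ((hmeas1 d₁).mul (hmeas1 d₂)).aestronglyMeasurable]
    have : ∀ x : Fin D → ℕ, ENNReal.ofReal (((x d₁ : ℕ) : ℝ) * ((x d₂ : ℕ) : ℝ))
        = ((x d₁ : ℕ) : ℝ≥0∞) * ((x d₂ : ℕ) : ℝ≥0∞) := by
      intro x
      rw [ENNReal.ofReal_mul (Nat.cast_nonneg _), hofReal1 d₁ x, hofReal1 d₂ x]
    rw [lintegral_congr this, hL2, ENNReal.toReal_ofReal]
    by_cases hd : d₁ = d₂
    · simp only [if_pos hd]; linarith [hM_nonneg d₁]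
    · simp only [if_neg hd]; linarith
  -- expand the covariance integral
  have hexpand : (∫ x, ((x d₁ : ℝ) - m d₁) * ((x d₂ : ℝ) - m d₂) ∂ν)
      = (P + if d₁ = d₂ then M d₁ else 0) - M d₁ * M d₂ := by
    have hptwise : ∀ x : Fin D → ℕ,
        ((x d₁ : ℝ) - m d₁) * ((x d₂ : ℝ) - m d₂)
        = ((x d₁ : ℕ) : ℝ) * ((x d₂ : ℕ) : ℝ)
          - (m d₂ * ((x d₁ : ℕ) : ℝ) + (m d₁ * ((x d₂ : ℕ) : ℝ) - m d₁ * m d₂)) := by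
      intro x; push_cast; ring
    have hgint : Integrable (fun x : Fin D → ℕ => m d₂ * ((x d₁ : ℕ) : ℝ)
        + (m d₁ * ((x d₂ : ℕ) : ℝ) - m d₁ * m d₂)) ν :=
      ((hint1 d₁).const_mul _).add (((hint1 d₂).const_mul _).sub (integrable_const _))
    have hsub2 : Integrable (fun x : Fin D → ℕ =>
        m d₁ * ((x d₂ : ℕ) : ℝ) - m d₁ * m d₂) ν :=
      ((hint1 d₂).const_mul _).sub (integrable_const _)
    have hIg : ∫ x, (m d₂ * ((x d₁ : ℕ) : ℝ)
        + (m d₁ * ((x d₂ : ℕ) : ℝ) - m d₁ * m d₂)) ∂ν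
        = m d₂ * m d₁ + (m d₁ * m d₂ - m d₁ * m d₂) := by
      rw [integral_add ((hint1 d₁).const_mul _) hsub2,
        integral_sub ((hint1 d₂).const_mul _) (integrable_const _),
        integral_const_mul, integral_const_mul, integral_const]
      simp only [measure_univ, probReal_univ, ENNReal.toReal_one, one_smul]
      rw [← hm d₁, ← hm d₂]
    rw [integral_congr_ae (Filter.Eventually.of_forall hptwise),
      integral_sub hint2 hgint, hIg, hI2, hmean d₁, hmean d₂]
    ring
  -- final algebra
  have halg : P - M d₁ * M d₂ = ∑ k, (c k / b ^ 2) * (A d₁ k * A d₂ k) := by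
    have hMM : M d₁ * M d₂ = ∑ k, ∑ l, (A d₁ k * (c k / b)) * (A d₂ l * (c l / b)) := by
      simp only [hM]
      rw [Finset.sum_mul_sum]
    rw [hP, hMM, ← Finset.sum_sub_distrib]
    refine Finset.sum_congr rfl fun k _ => ?_
    rw [← Finset.sum_sub_distrib]
    have hinner : ∀ l : Fin K, A d₁ k * A d₂ l * g k l
        - A d₁ k * (c k / b) * (A d₂ l * (c l / b))
        = if l = k then (c k / b ^ 2) * (A d₁ k * A d₂ k) else 0 := by
      intro l
      by_cases hkl : l = k
      · subst hkl
        simp only [hg, if_pos rfl, eq_self_iff_true, if_true]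
        field_simp
        ring
      · have : k ≠ l := fun h => hkl h.symm
        simp only [hg, if_neg this, if_neg hkl]
        ring
    rw [Finset.sum_congr rfl fun l _ => hinner l]
    simp
  have hite : (if d₁ = d₂ then m d₁ else 0) = (if d₁ = d₂ then M d₁ else 0) := by
    by_cases hd : d₁ = d₂ <;> simp [hd, hmean d₁, hmean d₂]
  rw [hexpand, hite, ← halg]
  ring
end
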